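/- arXiv:2009.04733 — 12 statements merged into one kernel-verified Lean document; each statement's English description precedes it below -/
import Mathlib

section
/- Let Φ be a proto-calculus on a Banach space X over a unital algebra F, and let f, g ∈ F with fg = 𝟏. Then Φ(g) is injective and Φ(g)⁻¹ ⊆ Φ(f). If in addition gf = fg (equivalently gf = 𝟏 as well), then Φ(f) = Φ(g)⁻¹. -/
open Filter Topology

variable {F : Type*} [Ring F] [Algebra ℂ F]
variable {X : Type*} [NormedAddCommGroup X] [NormedSpace ℂ X]

/-- `A` is (the graph of) the bounded everywhere-defined operator `T`. -/
def IsBddOp (A : X →ₗ.[ℂ] X) (T : X →L[ℂ] X) : Prop :=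
  ∀ x y : X, (x, y) ∈ A.graph ↔ T x = y

/-- `A` is a bounded (everywhere-defined) operator. -/
def Bdd (A : X →ₗ.[ℂ] X) : Prop := ∃ T : X →L[ℂ] X, IsBddOp A T

/-- A proto-calculus: a map from a unital algebra into closed operators
satisfying (FC1)–(FC3). -/
structure ProtoCalculus (F X : Type*) [Ring F] [Algebra ℂ F]
    [NormedAddCommGroup X] [NormedSpace ℂ X] where
  toFun : F → (X →ₗ.[ℂ] X)
  closed : ∀ f, IsClosed ((toFun f).graph : Set (X × X))
  fc1 : ∀ x y : X, (x, y) ∈ (toFun 1).graph ↔ y = x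
  fc2_smul : ∀ (l : ℂ) (f : F) (x y : X),
    (x, y) ∈ (toFun f).graph → (x, l • y) ∈ (toFun (l • f)).graph
  fc2_add : ∀ (f g : F) (x y z : X),
    (x, y) ∈ (toFun f).graph → (x, z) ∈ (toFun g).graph →
      (x, y + z) ∈ (toFun (f + g)).graph
  fc3_comp : ∀ (f g : F) (x y z : X),
    (x, y) ∈ (toFun g).graph → (y, z) ∈ (toFun f).graph →
      (x, z) ∈ (toFun (f * g)).graph
  fc3_dom : ∀ (f g : F) (x : X),
    (∃ y, (x, y) ∈ (toFun g).graph ∧ ∃ z, (y, z) ∈ (toFun f).graph) ↔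
      (x ∈ (toFun g).domain ∧ x ∈ (toFun (f * g)).domain)

/-- The set of Φ-bounded elements. -/
def ProtoCalculus.BddElems (Φ : ProtoCalculus F X) : Set F := {f | Bdd (Φ.toFun f)}

/-- The set of Φ-regularizers of `f`. -/
def ProtoCalculus.Reg (Φ : ProtoCalculus F X) (f : F) : Set F :=
  {e | Bdd (Φ.toFun e) ∧ Bdd (Φ.toFun (e * f))}

/-- `M` determines `Φ` at `f`:  `Φ(f)x = y` iff `Φ(ef)x = Φ(e)y` for all
`e ∈ M ∩ Reg(f,Φ)`. -/
def ProtoCalculus.Determines (Φ : ProtoCalculus F X) (M : Set F) (f : F) : Prop :=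
  ∀ x y : X, (x, y) ∈ (Φ.toFun f).graph ↔
    ∀ e ∈ M ∩ Φ.Reg f, ∀ z w : X,
      (x, z) ∈ (Φ.toFun (e * f)).graph → (y, w) ∈ (Φ.toFun e).graph → z = w

/-- An anchor set: a nonempty set of Φ-bounded elements with trivial common kernel. -/
def ProtoCalculus.AnchorSet (Φ : ProtoCalculus F X) (M : Set F) : Prop :=
  M.Nonempty ∧ M ⊆ Φ.BddElems ∧
    ∀ x : X, (∀ e ∈ M, (x, (0 : X)) ∈ (Φ.toFun e).graph) → x = 0

/-- `[f]_E = { e ∈ E : e f ∈ E }`. -/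
def Idx (E : Set F) (f : F) : Set F := {e ∈ E | e * f ∈ E}

/-- `E` is an algebraic core: `[f]_E` determines `Φ` at every `f`. -/
def ProtoCalculus.AlgebraicCore (Φ : ProtoCalculus F X) (E : Set F) : Prop :=
  ∀ f : F, Φ.Determines (Idx E f) f

/-- A calculus: a proto-calculus satisfying (FC4). -/
structure Calculus (F X : Type*) [Ring F] [Algebra ℂ F]
    [NormedAddCommGroup X] [NormedSpace ℂ X] extends ProtoCalculus F X where
  fc4 : ∀ f : F, toProtoCalculus.Determines toProtoCalculus.BddElems f



private lemma graph_fun {A : X →ₗ.[ℂ] X} {x y y' : X}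
    (h : (x, y) ∈ A.graph) (h' : (x, y') ∈ A.graph) : y = y' := by
  have hz : ((0 : X), y - y') ∈ A.graph := by
    have := A.graph.sub_mem h h'
    simpa using this
  have := A.graph_fst_eq_zero_snd hz rfl
  exact sub_eq_zero.mp this

private lemma inv_sub {Φ : ProtoCalculus F X} {a b : F} (hab : a * b = 1) :
    ∀ x y : X, (x, y) ∈ (Φ.toFun b).graph → (y, x) ∈ (Φ.toFun a).graph := by
  intro x y hxy
  have hdom : x ∈ (Φ.toFun b).domain ∧ x ∈ (Φ.toFun (a * b)).domain := by
    refine ⟨LinearPMap.mem_domain_of_mem_graph hxy, ?_⟩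
    rw [hab]
    exact LinearPMap.mem_domain_of_mem_graph ((Φ.fc1 x x).mpr rfl)
  obtain ⟨y', hy', z, hz⟩ := (Φ.fc3_dom a b x).mpr hdom
  have hyy : y' = y := graph_fun hy' hxy
  subst hyy
  have hxz : (x, z) ∈ (Φ.toFun (a * b)).graph := Φ.fc3_comp a b x y' z hy' hz
  rw [hab] at hxz
  have := (Φ.fc1 x z).mp hxz
  rwa [this] at hz

/-- If `fg = 1` then `Φ(g)` is injective and `Φ(g)⁻¹ ⊆ Φ(f)`;
if moreover `gf = fg`, then `Φ(f) = Φ(g)⁻¹`. -/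
theorem stmt2 (Φ : ProtoCalculus F X) (f g : F) (hfg : f * g = 1) :
    ((∀ x x' y : X, (x, y) ∈ (Φ.toFun g).graph → (x', y) ∈ (Φ.toFun g).graph →
        x = x') ∧
      (∀ x y : X, (x, y) ∈ (Φ.toFun g).graph → (y, x) ∈ (Φ.toFun f).graph)) ∧
    (g * f = f * g →
      ∀ x y : X, (x, y) ∈ (Φ.toFun f).graph ↔ (y, x) ∈ (Φ.toFun g).graph) := by
  refine ⟨⟨?_, inv_sub hfg⟩, ?_⟩
  · intro x x' y hx hx'
    exact graph_fun (inv_sub hfg x y hx) (inv_sub hfg x' y hx')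
  · intro hgf x y
    have hgf1 : g * f = 1 := hgf.trans hfg
    exact ⟨fun h => inv_sub hgf1 x y h, fun h => inv_sub hfg y x h⟩
end

section
/- Let Φ be a proto-calculus on a Banach space X over a unital algebra F. Then the set Bdd(F,Φ) := { f ∈ F : Φ(f) ∈ L(X) } of Φ-bounded elements is a unital subalgebra of F, and the restriction of Φ to Bdd(F,Φ) is a unital algebra homomorphism into L(X). -/
open Filter Topology

variable {F : Type*} [Ring F] [Algebra ℂ F]
variable {X : Type*} [NormedAddCommGroup X] [NormedSpace ℂ X]

/-- The Φ-bounded elements form a unital subalgebra of `F` and the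
restriction of `Φ` to them is a unital algebra homomorphism into `L(X)`. -/
theorem stmt3 (Φ : ProtoCalculus F X) :
    (1 : F) ∈ Φ.BddElems ∧
    (∀ f g : F, f ∈ Φ.BddElems → g ∈ Φ.BddElems →
      f + g ∈ Φ.BddElems ∧ f * g ∈ Φ.BddElems) ∧
    (∀ (l : ℂ) (f : F), f ∈ Φ.BddElems → l • f ∈ Φ.BddElems) ∧
    IsBddOp (Φ.toFun 1) 1 ∧
    (∀ (f g : F) (S T : X →L[ℂ] X), IsBddOp (Φ.toFun f) S → IsBddOp (Φ.toFun g) T →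
      IsBddOp (Φ.toFun (f + g)) (S + T) ∧ IsBddOp (Φ.toFun (f * g)) (S.comp T)) ∧
    (∀ (l : ℂ) (f : F) (S : X →L[ℂ] X), IsBddOp (Φ.toFun f) S →
      IsBddOp (Φ.toFun (l • f)) (l • S)) := by

  have uniq : ∀ (A : X →ₗ.[ℂ] X) {x y z : X},
      (x, y) ∈ A.graph → (x, z) ∈ A.graph → y = z := by
    intro A x y z hy hz
    exact A.mem_graph_snd_inj hy hz rfl
  have h1 : IsBddOp (Φ.toFun 1) (1 : X →L[ℂ] X) := by
    intro x y
    rw [Φ.fc1]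
    simp [eq_comm]
  have hsmul : ∀ (l : ℂ) (f : F) (S : X →L[ℂ] X), IsBddOp (Φ.toFun f) S →
      IsBddOp (Φ.toFun (l • f)) (l • S) := by
    intro l f S hS x y
    have hmem : (x, l • S x) ∈ (Φ.toFun (l • f)).graph :=
      Φ.fc2_smul l f x (S x) ((hS x (S x)).mpr rfl)
    constructor
    · intro h
      simp only [ContinuousLinearMap.smul_apply]
      exact uniq _ hmem h
    · intro h
      simp only [ContinuousLinearMap.smul_apply] at h
      rwa [h] at hmem
  have hops : ∀ (f g : F) (S T : X →L[ℂ] X), IsBddOp (Φ.toFun f) S →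
      IsBddOp (Φ.toFun g) T →
      IsBddOp (Φ.toFun (f + g)) (S + T) ∧ IsBddOp (Φ.toFun (f * g)) (S.comp T) := by
    intro f g S T hS hT
    constructor
    · intro x y
      have hmem : (x, S x + T x) ∈ (Φ.toFun (f + g)).graph :=
        Φ.fc2_add f g x (S x) (T x) ((hS x (S x)).mpr rfl) ((hT x (T x)).mpr rfl)
      constructor
      · intro h
        simp only [ContinuousLinearMap.add_apply]
        exact uniq _ hmem h
      · intro h
        simp only [ContinuousLinearMap.add_apply] at h
        rwa [h] at hmem
    · intro x y
      have hmem : (x, S (T x)) ∈ (Φ.toFun (f * g)).graph :=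
        Φ.fc3_comp f g x (T x) (S (T x)) ((hT x (T x)).mpr rfl) ((hS (T x) (S (T x))).mpr rfl)
      constructor
      · intro h
        simp only [ContinuousLinearMap.comp_apply]
        exact uniq _ hmem h
      · intro h
        simp only [ContinuousLinearMap.comp_apply] at h
        rwa [h] at hmem
  refine ⟨⟨1, h1⟩, ?_, ?_, h1, hops, hsmul⟩
  · rintro f g ⟨S, hS⟩ ⟨T, hT⟩
    exact ⟨⟨S + T, (hops f g S T hS hT).1⟩, ⟨S.comp T, (hops f g S T hS hT).2⟩⟩
  · rintro l f ⟨S, hS⟩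
    exact ⟨l • S, hsmul l f S hS⟩
end

section
/- Let M ⊆ Bdd(F,Φ) determine Φ at f, and let T ∈ L(X) commute with Φ(e) and with Φ(ef) for every e ∈ M ∩ Reg(f,Φ). Then T commutes with Φ(f), i.e., TΦ(f) ⊆ Φ(f)T. -/
open Filter Topology

variable {F : Type*} [Ring F] [Algebra ℂ F]
variable {X : Type*} [NormedAddCommGroup X] [NormedSpace ℂ X]

/-- A bounded operator `T` commutes with the (possibly unbounded) operator `A`
if `TA ⊆ AT`. -/
def Commutes (T : X →L[ℂ] X) (A : X →ₗ.[ℂ] X) : Prop :=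
  ∀ x y : X, (x, y) ∈ A.graph → (T x, T y) ∈ A.graph

/-- If `M ⊆ Bdd(F,Φ)` determines `Φ` at `f`, and `T` commutes with
`Φ(e)` and `Φ(ef)` for all `e ∈ M ∩ Reg(f,Φ)`, then `T` commutes with `Φ(f)`. -/
theorem stmt4 (Φ : ProtoCalculus F X) (f : F) (M : Set F) (hM : M ⊆ Φ.BddElems)
    (hdet : Φ.Determines M f) (T : X →L[ℂ] X)
    (hcomm : ∀ e ∈ M ∩ Φ.Reg f,
      Commutes T (Φ.toFun e) ∧ Commutes T (Φ.toFun (e * f))) :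
    Commutes T (Φ.toFun f) := by
  intro x y hxy
  rw [hdet (T x) (T y)]
  intro e he z w hz hw
  obtain ⟨hcE, hcEf⟩ := hcomm e he
  obtain ⟨⟨E, hE⟩, ⟨S, hS⟩⟩ := he.2
  -- From (x,y) ∈ Φ(f) and the determining property: S x = E y
  have hkey : S x = E y := (hdet x y).mp hxy e he (S x) (E y)
    ((hS x (S x)).mpr rfl) ((hE y (E y)).mpr rfl)
  -- z = T (S x)
  have hz' : z = T (S x) := by
    have h1 : (T x, T (S x)) ∈ (Φ.toFun (e * f)).graph :=
      hcEf x (S x) ((hS x (S x)).mpr rfl)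
    have h2 := (hS (T x) (T (S x))).mp h1
    have h3 := (hS (T x) z).mp hz
    rw [← h2, h3]
  have hw' : w = T (E y) := by
    have h1 : (T y, T (E y)) ∈ (Φ.toFun e).graph :=
      hcE y (E y) ((hE y (E y)).mpr rfl)
    have h2 := (hE (T y) (T (E y))).mp h1
    have h3 := (hE (T y) w).mp hw
    rw [← h2, h3]
  rw [hz', hw', hkey]
end

section
/- Let Φ : F → C(X) be a proto-calculus, f ∈ F, M ⊆ Bdd(F,Φ) a set determining Φ at f, and for each g ∈ M let N_g ⊆ Bdd(F,Φ) be an anchor set (i.e., ⋂_{e∈N_g} ker Φ(e) = {0}). Then the set N := ⋃_{g∈M} N_g·g also determines Φ at f. -/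
open Filter Topology

variable {F : Type*} [Ring F] [Algebra ℂ F]
variable {X : Type*} [NormedAddCommGroup X] [NormedSpace ℂ X]

lemma bdd_mul (Φ : ProtoCalculus F X) {a b : F} (ha : Bdd (Φ.toFun a)) (hb : Bdd (Φ.toFun b)) :
    Bdd (Φ.toFun (a * b)) := by
  obtain ⟨Ta, hTa⟩ := ha
  obtain ⟨Tb, hTb⟩ := hb
  refine ⟨Ta.comp Tb, fun x y => ?_⟩
  have hmem : (x, Ta (Tb x)) ∈ (Φ.toFun (a * b)).graph :=
    Φ.fc3_comp a b x (Tb x) (Ta (Tb x)) ((hTb x (Tb x)).mpr rfl) ((hTa (Tb x) _).mpr rfl)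
  constructor
  · intro h
    simp only [ContinuousLinearMap.comp_apply]
    exact ((Φ.toFun (a * b)).mem_graph_snd_inj h hmem rfl).symm
  · intro h
    rw [← h]
    simpa using hmem


/-- If `M` determines `Φ` at `f` and for each `g ∈ M` the set `N_g`
is an anchor set, then `N = ⋃_{g ∈ M} N_g · g` determines `Φ` at `f`. -/
theorem stmt5 (Φ : ProtoCalculus F X) (f : F) (M : Set F) (hM : M ⊆ Φ.BddElems)
    (hdet : Φ.Determines M f) (N : F → Set F)
    (hN : ∀ g ∈ M, Φ.AnchorSet (N g)) :
    Φ.Determines {h : F | ∃ g ∈ M, ∃ n ∈ N g, h = n * g} f := by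
  intro x y
  constructor
  · -- forward
    intro hxy e ⟨he, heReg⟩ z w hxz hyw
    obtain ⟨g, hgM, n, hn, rfl⟩ := he
    obtain ⟨Tn, hTn⟩ := (hN g hgM).2.1 hn
    obtain ⟨Tg, hTg⟩ := hM hgM
    obtain ⟨Te, hTe⟩ := heReg.1
    obtain ⟨Tef, hTef⟩ := heReg.2
    -- (x, Tn (Tg y)) ∈ graph ((n*g)*f)
    have h1 : (x, Tg y) ∈ (Φ.toFun (g * f)).graph :=
      Φ.fc3_comp g f x y (Tg y) hxy ((hTg y _).mpr rfl)
    have h2 : (x, Tn (Tg y)) ∈ (Φ.toFun (n * (g * f))).graph :=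
      Φ.fc3_comp n (g * f) x (Tg y) (Tn (Tg y)) h1 ((hTn (Tg y) _).mpr rfl)
    rw [← mul_assoc] at h2
    have hz : z = Tn (Tg y) := by
      rw [← (hTef x z).mp hxz, (hTef x _).mp h2]
    have h3 : (y, Tn (Tg y)) ∈ (Φ.toFun (n * g)).graph :=
      Φ.fc3_comp n g y (Tg y) (Tn (Tg y)) ((hTg y _).mpr rfl) ((hTn (Tg y) _).mpr rfl)
    have hw : w = Tn (Tg y) := by
      rw [← (hTe y w).mp hyw, (hTe y _).mp h3]
    rw [hz, hw]
  · -- backward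
    intro H
    refine (hdet x y).mpr ?_
    rintro g ⟨hgM, hgB, hgfB⟩ z w hxz hyw
    obtain ⟨_, hNbdd, hker⟩ := hN g hgM
    have hzw : z - w = 0 := by
      apply hker
      intro n hn
      obtain ⟨Tn, hTn⟩ := hNbdd hn
      have heReg : n * g ∈ Φ.Reg f := by
        refine ⟨bdd_mul Φ (hNbdd hn) hgB, ?_⟩
        rw [mul_assoc]
        exact bdd_mul Φ (hNbdd hn) hgfB
      have h1 : (x, Tn z) ∈ (Φ.toFun (n * (g * f))).graph :=
        Φ.fc3_comp n (g * f) x z (Tn z) hxz ((hTn z _).mpr rfl)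
      rw [← mul_assoc] at h1
      have h2 : (y, Tn w) ∈ (Φ.toFun (n * g)).graph :=
        Φ.fc3_comp n g y w (Tn w) hyw ((hTn w _).mpr rfl)
      have := H (n * g) ⟨⟨g, hgM, n, hn, rfl⟩, heReg⟩ (Tn z) (Tn w) h1 h2
      have hmem : ((z, Tn z) - (w, Tn w) : X × X) ∈ (Φ.toFun n).graph :=
        sub_mem ((hTn z _).mpr rfl) ((hTn w _).mpr rfl)
      simpa [this] using hmem
    rw [sub_eq_zero] at hzw
    exact hzw
end

section
/- Let Φ : F → C(X) be a calculus with F commutative, let f ∈ F, and let E ⊆ Reg(f,Φ) be an anchor set. Then E determines Φ at f. -/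
open Filter Topology

variable {F : Type*} [Ring F] [Algebra ℂ F]
variable {X : Type*} [NormedAddCommGroup X] [NormedSpace ℂ X]

/-- A linear partial map's graph is single-valued. -/
lemma graph_unique (A : X →ₗ.[ℂ] X) {x z w : X}
    (h1 : (x, z) ∈ A.graph) (h2 : (x, w) ∈ A.graph) : z = w := by
  have h : (x - x, z - w) ∈ A.graph := A.graph.sub_mem h1 h2
  rw [sub_self] at h
  exact sub_eq_zero.mp (A.graph_fst_eq_zero_snd h rfl)

/-- For a calculus over a commutative algebra, any anchor set
`E ⊆ Reg(f,Φ)` determines `Φ` at `f`. -/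
theorem stmt7 {F : Type*} [CommRing F] [Algebra ℂ F] (Φ : Calculus F X) (f : F)
    (E : Set F) (hE : E ⊆ Φ.toProtoCalculus.Reg f)
    (hanc : Φ.toProtoCalculus.AnchorSet E) :
    Φ.toProtoCalculus.Determines E f := by
  intro x y
  constructor
  · intro hxy e _ z w hz hw
    exact graph_unique _ hz (Φ.fc3_comp e f x y w hxy hw)
  · intro hcond
    rw [Φ.fc4 f x y]
    rintro a ⟨-, hTa', hTaf'⟩ z w hz hw
    obtain ⟨Ta, hTa⟩ := hTa'
    obtain ⟨Taf, hTaf⟩ := hTaf'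
    -- reduce to the anchor condition on z - w
    have key : ∀ e ∈ E, (z - w, (0 : X)) ∈ (Φ.toFun e).graph := by
      intro e he
      obtain ⟨⟨Te, hTe⟩, ⟨Tef, hTef⟩⟩ := hE he
      have memTe : ∀ u : X, (u, Te u) ∈ (Φ.toFun e).graph := fun u => (hTe u _).mpr rfl
      have memTa : ∀ u : X, (u, Ta u) ∈ (Φ.toFun a).graph := fun u => (hTa u _).mpr rfl
      have memTef : ∀ u : X, (u, Tef u) ∈ (Φ.toFun (e * f)).graph :=
        fun u => (hTef u _).mpr rfl
      -- from the hypothesis on E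
      have key1 : Tef x = Te y :=
        hcond e ⟨he, hE he⟩ (Tef x) (Te y) (memTef x) (memTe y)
      -- Te z = Ta (Tef x)
      have m1 : (x, Te z) ∈ (Φ.toFun (e * (a * f))).graph :=
        Φ.fc3_comp e (a * f) x z (Te z) hz (memTe z)
      have m2 : (x, Ta (Tef x)) ∈ (Φ.toFun (a * (e * f))).graph :=
        Φ.fc3_comp a (e * f) x (Tef x) (Ta (Tef x)) (memTef x) (memTa (Tef x))
      have hcomm : e * (a * f) = a * (e * f) := by ring
      rw [hcomm] at m1
      have key2 : Te z = Ta (Tef x) := graph_unique _ m1 m2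
      -- w = Ta y
      have hwy : Ta y = w := (hTa y w).mp hw
      -- Te (Ta y) = Ta (Te y)
      have m3 : (y, Te (Ta y)) ∈ (Φ.toFun (e * a)).graph :=
        Φ.fc3_comp e a y (Ta y) (Te (Ta y)) (memTa y) (memTe (Ta y))
      have m4 : (y, Ta (Te y)) ∈ (Φ.toFun (a * e)).graph :=
        Φ.fc3_comp a e y (Te y) (Ta (Te y)) (memTe y) (memTa (Te y))
      have hcomm2 : e * a = a * e := mul_comm e a
      rw [hcomm2] at m3
      have key3 : Te (Ta y) = Ta (Te y) := graph_unique _ m3 m4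
      have hzw : Te z = Te w := by
        rw [key2, key1, ← key3, hwy]
      have : (z - w, Te z - Te w) ∈ (Φ.toFun e).graph :=
        (Φ.toFun e).graph.sub_mem (memTe z) (memTe w)
      rwa [hzw, sub_self] at this
    have := hanc.2.2 (z - w) key
    exact sub_eq_zero.mp this
end

section
/- Let Φ₁, Φ₂ : F → C(X) be proto-calculi and E ⊆ F a set on which they agree. If E is an algebraic core for Φ₂ (i.e., for each f ∈ F the set [f]_E = {e ∈ E : ef ∈ E} determines Φ₂ at f), then Φ₁(f) ⊆ Φ₂(f) for every f ∈ F. In particular, if E is an algebraic core for both, then Φ₁ = Φ₂. -/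
open Filter Topology

variable {F : Type*} [Ring F] [Algebra ℂ F]
variable {X : Type*} [NormedAddCommGroup X] [NormedSpace ℂ X]

private lemma stmt9_aux (Φ₁ Φ₂ : ProtoCalculus F X) (E : Set F)
    (hE : ∀ e ∈ E, Φ₁.toFun e = Φ₂.toFun e)
    (hcore : Φ₂.AlgebraicCore E) :
    ∀ f : F, (Φ₁.toFun f).graph ≤ (Φ₂.toFun f).graph := by
  intro f p hp
  obtain ⟨x, y⟩ := p
  rw [(hcore f x y)]
  rintro e ⟨⟨heE, hefE⟩, _⟩ z w hz hw
  rw [← hE _ hefE] at hz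
  rw [← hE _ heE] at hw
  have hxw : (x, w) ∈ (Φ₁.toFun (e * f)).graph := Φ₁.fc3_comp e f x y w hp hw
  exact (Φ₁.toFun (e * f)).mem_graph_snd_inj hz hxw rfl

/-- If two proto-calculi agree on a set `E` of bounded elements which
is an algebraic core for `Φ₂`, then `Φ₁(f) ⊆ Φ₂(f)` for all `f`; if `E` is an
algebraic core for both, then `Φ₁ = Φ₂`. -/
theorem stmt9 (Φ₁ Φ₂ : ProtoCalculus F X) (E : Set F)
    (hE : ∀ e ∈ E, Φ₁.toFun e = Φ₂.toFun e)
    (hEb1 : E ⊆ Φ₁.BddElems) (hEb2 : E ⊆ Φ₂.BddElems)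
    (hcore : Φ₂.AlgebraicCore E) :
    (∀ f : F, (Φ₁.toFun f).graph ≤ (Φ₂.toFun f).graph) ∧
    (Φ₁.AlgebraicCore E → ∀ f : F, Φ₁.toFun f = Φ₂.toFun f) := by
  refine ⟨stmt9_aux Φ₁ Φ₂ E hE hcore, fun hcore1 f => ?_⟩
  apply LinearPMap.eq_of_eq_graph
  exact le_antisymm (stmt9_aux Φ₁ Φ₂ E hE hcore f)
    (stmt9_aux Φ₂ Φ₁ E (fun e he => (hE e he).symm) hcore1 f)
end

section
/- Extension theorem: Let F be a unital algebra, E ⊆ F a (not necessarily unital) subalgebra, X a Banach space, and Φ : E → L(X) an algebra homomorphism such that each f ∈ F is anchored in E (i.e., [f]_E = {e ∈ E : ef ∈ E} satisfies ⋂_{e∈[f]_E} ker Φ(e) = {0}). Then the map Φ̂ : F → C(X) defined by: Φ̂(f)x = y iff Φ(ef)x = Φ(e)y for all e ∈ [f]_E, is a well-defined calculus (satisfies FC1–FC4) that extends Φ, and it is the unique calculus on F extending Φ. -/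
open Filter Topology

variable {F : Type*} [Ring F] [Algebra ℂ F]
variable {X : Type*} [NormedAddCommGroup X] [NormedSpace ℂ X]

/-- `f` is anchored in `E` (w.r.t. the representation `φ`): the set
`[f]_E = {e ∈ E : e f ∈ E}` is nonempty and has trivial common kernel. -/
def AnchoredIn (E : NonUnitalSubalgebra ℂ F) (φ : E →ₙₐ[ℂ] (X →L[ℂ] X))
    (f : F) : Prop :=
  (∃ e : F, e ∈ E ∧ e * f ∈ E) ∧
    ∀ x : X, (∀ (e : F) (he : e ∈ E), e * f ∈ E → φ ⟨e, he⟩ x = 0) → x = 0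

section ExtAux
variable {E : NonUnitalSubalgebra ℂ F} {φ : E →ₙₐ[ℂ] (X →L[ℂ] X)}



lemma phi_eq (φ : E →ₙₐ[ℂ] (X →L[ℂ] X)) {u v : F} (hu : u ∈ E) (hv : v ∈ E) (h : u = v) :
    φ ⟨u, hu⟩ = φ ⟨v, hv⟩ := by subst h; rfl

lemma phi_mul_apply (φ : E →ₙₐ[ℂ] (X →L[ℂ] X)) {a b : F} (ha : a ∈ E) (hb : b ∈ E)
    (hab : a * b ∈ E) (x : X) :
    φ ⟨a * b, hab⟩ x = φ ⟨a, ha⟩ (φ ⟨b, hb⟩ x) := by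
  have h : (⟨a*b, hab⟩ : E) = ⟨a,ha⟩ * ⟨b,hb⟩ := rfl
  rw [h, map_mul]; rfl

lemma phi_add_apply (φ : E →ₙₐ[ℂ] (X →L[ℂ] X)) {a b : F} (ha : a ∈ E) (hb : b ∈ E)
    (hab : a + b ∈ E) (x : X) :
    φ ⟨a + b, hab⟩ x = φ ⟨a, ha⟩ x + φ ⟨b, hb⟩ x := by
  have h : (⟨a+b, hab⟩ : E) = ⟨a,ha⟩ + ⟨b,hb⟩ := rfl
  rw [h, map_add]; rfl

lemma phi_smul_apply (φ : E →ₙₐ[ℂ] (X →L[ℂ] X)) {a : F} (l : ℂ) (ha : a ∈ E)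
    (hla : l • a ∈ E) (x : X) :
    φ ⟨l • a, hla⟩ x = l • φ ⟨a, ha⟩ x := by
  have h : (⟨l • a, hla⟩ : E) = l • ⟨a,ha⟩ := rfl
  rw [h, map_smul]; rfl

variable (E : NonUnitalSubalgebra ℂ F) (φ : E →ₙₐ[ℂ] (X →L[ℂ] X))

def extGraph (f : F) : Submodule ℂ (X × X) where
  carrier := {p | ∀ (e : F) (he : e ∈ E) (hef : e * f ∈ E), φ ⟨e * f, hef⟩ p.1 = φ ⟨e, he⟩ p.2}
  add_mem' := by
    intro p q hp hq e he hef
    rw [Prod.fst_add, Prod.snd_add, map_add, map_add, hp e he hef, hq e he hef]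
  zero_mem' := by intro e he hef; simp
  smul_mem' := by
    intro c p hp e he hef
    rw [Prod.smul_fst, Prod.smul_snd, map_smul, map_smul, hp e he hef]

lemma mem_extGraph {f : F} {p : X × X} :
    p ∈ extGraph E φ f ↔
      ∀ (e : F) (he : e ∈ E) (hef : e * f ∈ E), φ ⟨e * f, hef⟩ p.1 = φ ⟨e, he⟩ p.2 :=
  Iff.rfl

variable {E φ}

lemma extGraph_fun (hanch : ∀ f : F, AnchoredIn E φ f) (f : F) :
    ∀ p ∈ extGraph E φ f, p.1 = (0:X) → p.2 = (0:X) := by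
  rintro ⟨x, y⟩ hp h0
  refine (hanch f).2 y fun e he hef => ?_
  have h := hp e he hef
  simp only at h0
  rw [h0, map_zero] at h
  exact h.symm

variable (E φ) in
noncomputable def extPMap (f : F) : X →ₗ.[ℂ] X := (extGraph E φ f).toLinearPMap

lemma extPMap_graph (hanch : ∀ f : F, AnchoredIn E φ f) (f : F) :
    (extPMap E φ f).graph = extGraph E φ f :=
  Submodule.toLinearPMap_graph_eq _ (fun p hp => extGraph_fun hanch f p hp)

lemma mem_extPMap_graph (hanch : ∀ f : F, AnchoredIn E φ f) (f : F) (x y : X) :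
    (x, y) ∈ (extPMap E φ f).graph ↔
      ∀ (e : F) (he : e ∈ E) (hef : e * f ∈ E), φ ⟨e * f, hef⟩ x = φ ⟨e, he⟩ y := by
  rw [extPMap_graph hanch]; exact Iff.rfl

lemma extGraph_closed (f : F) : IsClosed ((extGraph E φ f : Submodule ℂ (X × X)) : Set (X × X)) := by
  have h : ((extGraph E φ f : Submodule ℂ (X × X)) : Set (X × X)) =
      ⋂ (e : F) (he : e ∈ E) (hef : e * f ∈ E),
        {p : X × X | φ ⟨e * f, hef⟩ p.1 = φ ⟨e, he⟩ p.2} := by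
    ext p
    simp only [Set.mem_iInter, Set.mem_setOf_eq, SetLike.mem_coe, mem_extGraph]
  rw [h]
  exact isClosed_iInter fun e => isClosed_iInter fun he => isClosed_iInter fun hef =>
    isClosed_eq ((φ _).continuous.comp continuous_fst) ((φ _).continuous.comp continuous_snd)

lemma phi_eq_apply (φ : E →ₙₐ[ℂ] (X →L[ℂ] X)) {u v : F} (hu : u ∈ E) (hv : v ∈ E)
    (h : u = v) (x : X) : φ ⟨u, hu⟩ x = φ ⟨v, hv⟩ x := by rw [phi_eq φ hu hv h]

lemma ext_fc1 (hanch : ∀ f : F, AnchoredIn E φ f) (x y : X) :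
    (x, y) ∈ (extPMap E φ 1).graph ↔ y = x := by
  rw [mem_extPMap_graph hanch]
  constructor
  · intro h
    have hx : x - y = 0 := by
      refine (hanch 1).2 (x - y) fun e he he1 => ?_
      rw [map_sub, sub_eq_zero]
      calc φ ⟨e, he⟩ x = φ ⟨e * 1, he1⟩ x := phi_eq_apply φ he he1 (mul_one e).symm x
        _ = φ ⟨e, he⟩ y := h e he he1
    rw [sub_eq_zero] at hx; exact hx.symm
  · rintro rfl e he hef
    exact phi_eq_apply φ hef he (mul_one e) _

lemma ext_fc2_smul (hanch : ∀ f : F, AnchoredIn E φ f) (l : ℂ) (f : F) (x y : X)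
    (h : (x, y) ∈ (extPMap E φ f).graph) :
    (x, l • y) ∈ (extPMap E φ (l • f)).graph := by
  rw [mem_extPMap_graph hanch] at h ⊢
  intro e he hef
  rcases eq_or_ne l 0 with rfl | hl
  · have h1 : (⟨e * ((0:ℂ) • f), hef⟩ : E) = 0 := by
      ext; simp
    rw [h1, map_zero]; simp
  · have hef' : e * f ∈ E := by
      have : e * f = l⁻¹ • (e * (l • f)) := by
        rw [mul_smul_comm, smul_smul, inv_mul_cancel₀ hl, one_smul]
      rw [this]; exact SMulMemClass.smul_mem _ hef
    calc φ ⟨e * (l • f), hef⟩ x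
        = φ ⟨l • (e * f), (mul_smul_comm l e f) ▸ hef⟩ x :=
          phi_eq_apply φ hef _ (mul_smul_comm l e f) x
      _ = l • φ ⟨e * f, hef'⟩ x := phi_smul_apply φ l hef' _ x
      _ = l • φ ⟨e, he⟩ y := by rw [h e he hef']
      _ = φ ⟨e, he⟩ (l • y) := (map_smul _ l y).symm

lemma ext_fc2_add (hanch : ∀ f : F, AnchoredIn E φ f) (f g : F) (x y z : X)
    (hy : (x, y) ∈ (extPMap E φ f).graph) (hz : (x, z) ∈ (extPMap E φ g).graph) :
    (x, y + z) ∈ (extPMap E φ (f + g)).graph := by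
  rw [mem_extPMap_graph hanch] at hy hz ⊢
  intro e he hefg
  rw [← sub_eq_zero]
  refine (hanch (e * f)).2 _ fun a ha haef => ?_
  have haefg : a * (e * (f + g)) ∈ E := mul_mem ha hefg
  have heq : a * (e * (f + g)) = a * (e * f) + a * (e * g) := by noncomm_ring
  have haeg : a * (e * g) ∈ E := by
    have : a * (e * g) = a * (e * (f + g)) - a * (e * f) := by rw [heq, add_sub_cancel_left]
    rw [this]; exact sub_mem haefg haef
  have hae : a * e ∈ E := mul_mem ha he
  have h1 : φ ⟨a, ha⟩ (φ ⟨e * (f + g), hefg⟩ x) = φ ⟨a * e, hae⟩ y + φ ⟨a * e, hae⟩ z := by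
    rw [← phi_mul_apply φ ha hefg haefg x]
    rw [phi_eq_apply φ haefg (heq ▸ haefg) heq x, phi_add_apply φ haef haeg _ x]
    rw [phi_eq_apply φ haef (by rw [mul_assoc]; exact haef : a * e * f ∈ E) (mul_assoc a e f).symm x,
      hy (a * e) hae (by rw [mul_assoc]; exact haef)]
    rw [phi_eq_apply φ haeg (by rw [mul_assoc]; exact haeg : a * e * g ∈ E) (mul_assoc a e g).symm x,
      hz (a * e) hae (by rw [mul_assoc]; exact haeg)]
  have h2 : φ ⟨a, ha⟩ (φ ⟨e, he⟩ (y + z)) = φ ⟨a * e, hae⟩ y + φ ⟨a * e, hae⟩ z := by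
    rw [← phi_mul_apply φ ha he hae, map_add]
  rw [map_sub, h1, h2, sub_self]


lemma ext_fc3_comp (hanch : ∀ f : F, AnchoredIn E φ f) (f g : F) (x y z : X)
    (hxy : (x, y) ∈ (extPMap E φ g).graph) (hyz : (y, z) ∈ (extPMap E φ f).graph) :
    (x, z) ∈ (extPMap E φ (f * g)).graph := by
  rw [mem_extPMap_graph hanch] at hxy hyz ⊢
  intro e he hefg
  rw [← sub_eq_zero]
  refine (hanch (e * f)).2 _ fun a ha haef => ?_
  rw [map_sub, sub_eq_zero]
  have hae : a * e ∈ E := mul_mem ha he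
  have haefg : a * (e * (f * g)) ∈ E := mul_mem ha hefg
  have h1 : a * (e * f) * g ∈ E := by
    rw [mul_assoc a (e * f) g, mul_assoc e f g]; exact haefg
  have h2 : a * e * f ∈ E := by rw [mul_assoc]; exact haef
  calc φ ⟨a, ha⟩ (φ ⟨e * (f * g), hefg⟩ x)
      = φ ⟨a * (e * (f * g)), haefg⟩ x := (phi_mul_apply φ ha hefg haefg x).symm
    _ = φ ⟨a * (e * f) * g, h1⟩ x :=
        phi_eq_apply φ haefg h1 (by simp only [mul_assoc]) x
    _ = φ ⟨a * (e * f), haef⟩ y := hxy (a * (e * f)) haef h1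
    _ = φ ⟨a * e * f, h2⟩ y := phi_eq_apply φ haef h2 (mul_assoc a e f).symm y
    _ = φ ⟨a * e, hae⟩ z := hyz (a * e) hae h2
    _ = φ ⟨a, ha⟩ (φ ⟨e, he⟩ z) := phi_mul_apply φ ha he hae z

lemma ext_fc3_dom (hanch : ∀ f : F, AnchoredIn E φ f) (f g : F) (x : X) :
    (∃ y, (x, y) ∈ (extPMap E φ g).graph ∧ ∃ z, (y, z) ∈ (extPMap E φ f).graph) ↔
      (x ∈ (extPMap E φ g).domain ∧ x ∈ (extPMap E φ (f * g)).domain) := by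
  constructor
  · rintro ⟨y, hxy, z, hyz⟩
    exact ⟨LinearPMap.mem_domain_of_mem_graph hxy,
      LinearPMap.mem_domain_of_mem_graph (ext_fc3_comp hanch f g x y z hxy hyz)⟩
  · rintro ⟨hg, hfg⟩
    obtain ⟨y, hxy⟩ := LinearPMap.mem_domain_iff.mp hg
    obtain ⟨w, hxw⟩ := LinearPMap.mem_domain_iff.mp hfg
    refine ⟨y, hxy, w, ?_⟩
    rw [mem_extPMap_graph hanch] at hxy hxw ⊢
    intro b hb hbf
    rw [← sub_eq_zero]
    refine (hanch (b * f * g)).2 _ fun a ha habfg => ?_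
    rw [map_sub, sub_eq_zero]
    have habf : a * (b * f) ∈ E := mul_mem ha hbf
    have hab : a * b ∈ E := mul_mem ha hb
    have h1 : a * (b * f) * g ∈ E := by
      rw [mul_assoc a (b * f) g]; exact habfg
    have h2 : a * b * (f * g) ∈ E := by
      rw [mul_assoc a b (f * g), ← mul_assoc b f g]; exact habfg
    calc φ ⟨a, ha⟩ (φ ⟨b * f, hbf⟩ y)
        = φ ⟨a * (b * f), habf⟩ y := (phi_mul_apply φ ha hbf habf y).symm
      _ = φ ⟨a * (b * f) * g, h1⟩ x := (hxy (a * (b * f)) habf h1).symm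
      _ = φ ⟨a * b * (f * g), h2⟩ x :=
          phi_eq_apply φ h1 h2 (by simp only [mul_assoc]) x
      _ = φ ⟨a * b, hab⟩ w := hxw (a * b) hab h2
      _ = φ ⟨a, ha⟩ (φ ⟨b, hb⟩ w) := phi_mul_apply φ ha hb hab w

lemma ext_bdd (hanch : ∀ f : F, AnchoredIn E φ f) (e₀ : F) (he₀ : e₀ ∈ E) :
    IsBddOp (extPMap E φ e₀) (φ ⟨e₀, he₀⟩) := by
  intro x y
  rw [mem_extPMap_graph hanch]
  constructor
  · intro h
    rw [← sub_eq_zero]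
    refine (hanch e₀).2 _ fun a ha hae => ?_
    rw [map_sub, sub_eq_zero, ← phi_mul_apply φ ha he₀ hae x]
    exact h a ha hae
  · rintro rfl a ha hae
    exact phi_mul_apply φ ha he₀ hae x

/-- The extension as a calculus. -/
noncomputable def extCalc (hanch : ∀ f : F, AnchoredIn E φ f) : Calculus F X where
  toFun := extPMap E φ
  closed f := by
    rw [extPMap_graph hanch f]
    exact extGraph_closed f
  fc1 := ext_fc1 hanch
  fc2_smul := ext_fc2_smul hanch
  fc2_add := ext_fc2_add hanch
  fc3_comp := ext_fc3_comp hanch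
  fc3_dom := ext_fc3_dom hanch
  fc4 := by
    intro f x y
    constructor
    · intro h e _ z w hz hw
      have hcomp := ext_fc3_comp hanch e f x y w h hw
      exact LinearPMap.mem_graph_snd_inj _ hz hcomp rfl
    · intro h
      rw [mem_extPMap_graph hanch]
      intro e₀ he₀ hef
      have hb0 := ext_bdd hanch e₀ he₀
      have hbf := ext_bdd hanch (e₀ * f) hef
      exact h e₀ ⟨⟨_, hb0⟩, ⟨_, hb0⟩, ⟨_, hbf⟩⟩ (φ ⟨e₀ * f, hef⟩ x) (φ ⟨e₀, he₀⟩ y)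
        ((hbf x _).mpr rfl) ((hb0 y _).mpr rfl)

lemma ext_uniq (hanch : ∀ f : F, AnchoredIn E φ f) (Ψ' : Calculus F X)
    (hb : ∀ (e : F) (he : e ∈ E), IsBddOp (Ψ'.toFun e) (φ ⟨e, he⟩)) (f : F) :
    Ψ'.toFun f = extPMap E φ f := by
  apply LinearPMap.eq_of_eq_graph
  rw [extPMap_graph hanch]
  ext ⟨x, y⟩
  rw [mem_extGraph E φ]
  constructor
  · intro hxy e he hef
    have h1 : (y, φ ⟨e, he⟩ y) ∈ (Ψ'.toFun e).graph := (hb e he y _).mpr rfl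
    have h2 := Ψ'.fc3_comp e f x y _ hxy h1
    have h3 : (x, φ ⟨e * f, hef⟩ x) ∈ (Ψ'.toFun (e * f)).graph := (hb (e * f) hef x _).mpr rfl
    exact LinearPMap.mem_graph_snd_inj _ h3 h2 rfl
  · intro hxy
    rw [Ψ'.fc4 f x y]
    rintro e ⟨-, ⟨Te, hTe⟩, ⟨Tef, hTef⟩⟩ z w hz hw
    rw [← (hTef x z).mp hz, ← (hTe y w).mp hw]
    rw [← sub_eq_zero]
    refine (hanch (e * f)).2 _ fun b hb' hbef => ?_
    rw [map_sub, sub_eq_zero]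
    -- φ b (Tef x) = φ (b(ef)) x
    have hTefx : (x, Tef x) ∈ (Ψ'.toFun (e * f)).graph := (hTef x _).mpr rfl
    have h1 := Ψ'.fc3_comp b (e * f) x _ _ hTefx ((hb b hb' (Tef x) _).mpr rfl)
    have h1' : φ ⟨b * (e * f), hbef⟩ x = φ ⟨b, hb'⟩ (Tef x) := (hb _ hbef x _).mp h1
    rw [← h1']
    -- set u := φ b (Te y); (y, u) ∈ graph Ψ'(b*e)
    have hTey : (y, Te y) ∈ (Ψ'.toFun e).graph := (hTe y _).mpr rfl
    have h2 := Ψ'.fc3_comp b e y _ _ hTey ((hb b hb' (Te y) _).mpr rfl)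
    -- inner anchoring at b*e
    rw [← sub_eq_zero]
    refine (hanch (b * e)).2 _ fun a ha habe => ?_
    rw [map_sub, sub_eq_zero]
    have h3 := Ψ'.fc3_comp a (b * e) y _ _ h2 ((hb a ha (φ ⟨b, hb'⟩ (Te y)) _).mpr rfl)
    have h3' : φ ⟨a * (b * e), habe⟩ y = φ ⟨a, ha⟩ (φ ⟨b, hb'⟩ (Te y)) :=
      (hb _ habe y _).mp h3
    have habef : a * (b * (e * f)) ∈ E := mul_mem ha hbef
    have habef' : a * (b * e) * f ∈ E := by
      rw [mul_assoc a (b * e) f, mul_assoc b e f]; exact habef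
    calc φ ⟨a, ha⟩ (φ ⟨b * (e * f), hbef⟩ x)
        = φ ⟨a * (b * (e * f)), habef⟩ x := (phi_mul_apply φ ha hbef habef x).symm
      _ = φ ⟨a * (b * e) * f, habef'⟩ x :=
          phi_eq_apply φ habef habef' (by simp only [mul_assoc]) x
      _ = φ ⟨a * (b * e), habe⟩ y := hxy (a * (b * e)) habe habef'
      _ = φ ⟨a, ha⟩ (φ ⟨b, hb'⟩ (Te y)) := h3'

end ExtAux

/-- **Extension theorem.** If `φ : E → L(X)` is an algebra
homomorphism on a subalgebra `E ⊆ F` such that each `f ∈ F` is anchored in `E`,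
then the formula `Φ̂(f)x = y ⟺ ∀ e ∈ [f]_E, φ(ef)x = φ(e)y` defines a calculus on
`F` extending `φ`, and it is the unique calculus on `F` extending `φ`. -/
theorem stmt10 (E : NonUnitalSubalgebra ℂ F) (φ : E →ₙₐ[ℂ] (X →L[ℂ] X))
    (hanch : ∀ f : F, AnchoredIn E φ f) :
    ∃ Ψ : Calculus F X,
      (∀ (f : F) (x y : X), (x, y) ∈ (Ψ.toFun f).graph ↔
        ∀ (e : F) (he : e ∈ E) (hef : e * f ∈ E), φ ⟨e * f, hef⟩ x = φ ⟨e, he⟩ y) ∧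
      (∀ (e : F) (he : e ∈ E), IsBddOp (Ψ.toFun e) (φ ⟨e, he⟩)) ∧
      (∀ Ψ' : Calculus F X,
        (∀ (e : F) (he : e ∈ E), IsBddOp (Ψ'.toFun e) (φ ⟨e, he⟩)) →
        ∀ f : F, Ψ'.toFun f = Ψ.toFun f) :=  by
  refine ⟨extCalc hanch, fun f x y => mem_extPMap_graph hanch f x y,
    fun e he => ext_bdd hanch e he, fun Ψ' hΨ' f => ext_uniq hanch Ψ' hΨ' f⟩
end

section
/- Let F be a unital algebra, E ⊆ F a subalgebra, and Φ : E → L(X) a non-degenerate algebra representation (E itself is an anchor set). Define F' := { f ∈ F : for every e ∈ E, [ef]_E is an anchor set }. Then F' is a unital subalgebra of F containing E, each element of F' is anchored in E, and F' contains every unital subalgebra of F with these two properties (i.e., F' is the maximal anchored subalgebra). -/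
open Filter Topology

variable {F : Type*} [Ring F] [Algebra ℂ F]
variable {X : Type*} [NormedAddCommGroup X] [NormedSpace ℂ X]

/-- For a non-degenerate representation `φ : E → L(X)`, the set
`F' = {f : ∀ e ∈ E, [ef]_E is an anchor set}` is a unital subalgebra of `F`
containing `E`, each of its elements is anchored in `E`, and it contains every
unital subalgebra of `F` with these properties. -/
theorem stmt11 (E : NonUnitalSubalgebra ℂ F) (φ : E →ₙₐ[ℂ] (X →L[ℂ] X))
    (hnd : (E : Set F).Nonempty ∧
      ∀ x : X, (∀ (e : F) (he : e ∈ E), φ ⟨e, he⟩ x = 0) → x = 0) :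
    (1 : F) ∈ {f : F | ∀ e : F, e ∈ E → AnchoredIn E φ (e * f)} ∧
    (∀ f g : F, (∀ e : F, e ∈ E → AnchoredIn E φ (e * f)) →
      (∀ e : F, e ∈ E → AnchoredIn E φ (e * g)) →
      (∀ e : F, e ∈ E → AnchoredIn E φ (e * (f + g))) ∧
      (∀ e : F, e ∈ E → AnchoredIn E φ (e * (f * g)))) ∧
    (∀ (c : ℂ) (f : F), (∀ e : F, e ∈ E → AnchoredIn E φ (e * f)) →
      ∀ e : F, e ∈ E → AnchoredIn E φ (e * (c • f))) ∧
    ((E : Set F) ⊆ {f : F | ∀ e : F, e ∈ E → AnchoredIn E φ (e * f)}) ∧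
    (∀ f : F, (∀ e : F, e ∈ E → AnchoredIn E φ (e * f)) → AnchoredIn E φ f) ∧
    (∀ G : Subalgebra ℂ F, (E : Set F) ⊆ (G : Set F) →
      (∀ f ∈ G, AnchoredIn E φ f) →
      (G : Set F) ⊆ {f : F | ∀ e : F, e ∈ E → AnchoredIn E φ (e * f)}) := by
  -- multiplicativity of φ on representatives
  have hmulφ : ∀ (a b : F) (ha : a ∈ E) (hb : b ∈ E) (hba : b * a ∈ E) (x : X),
      φ ⟨b * a, hba⟩ x = φ ⟨b, hb⟩ (φ ⟨a, ha⟩ x) := by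
    intro a b ha hb hba x
    have h1 : (⟨b * a, hba⟩ : E) = ⟨b, hb⟩ * ⟨a, ha⟩ := rfl
    rw [h1, map_mul]
    rfl
  -- every element of E is anchored
  have hE : ∀ f : F, f ∈ E → AnchoredIn E φ f := by
    intro f hf
    obtain ⟨e0, he0⟩ := hnd.1
    refine ⟨⟨e0, he0, mul_mem he0 hf⟩, ?_⟩
    intro x hx
    exact hnd.2 x fun e he => hx e he (mul_mem he hf)
  have hF'E : (E : Set F) ⊆ {f : F | ∀ e : F, e ∈ E → AnchoredIn E φ (e * f)} := by
    intro f hf e he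
    exact hE _ (mul_mem he hf)
  refine ⟨?_, ?_, ?_, hF'E, ?_, ?_⟩
  · -- 1 ∈ F'
    intro e he
    rw [mul_one]
    exact hE e he
  · -- closed under + and *
    intro f g hf hg
    constructor
    · -- sum
      intro e he
      obtain ⟨⟨a, ha, haf⟩, hkf⟩ := hf e he
      obtain ⟨⟨b0, hb0, hb0g⟩, _⟩ := hg (a * e) (mul_mem ha he)
      have key : ∀ (a : F), a ∈ E → a * (e * f) ∈ E →
          ∀ (b : F), b ∈ E → b * (a * e * g) ∈ E → b * a * (e * (f + g)) ∈ E := by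
        intro a ha haf b hb hbg
        have h1 : b * a * (e * (f + g)) = b * (a * (e * f)) + b * (a * e * g) := by
          simp only [mul_add, mul_assoc]
        rw [h1]
        exact add_mem (mul_mem hb haf) hbg
      refine ⟨⟨b0 * a, mul_mem hb0 ha, key a ha haf b0 hb0 hb0g⟩, ?_⟩
      intro x hx
      refine hkf x ?_
      intro a' ha' ha'f
      obtain ⟨_, hk2⟩ := hg (a' * e) (mul_mem ha' he)
      refine hk2 (φ ⟨a', ha'⟩ x) ?_
      intro b hb hbg
      rw [← hmulφ a' b ha' hb (mul_mem hb ha')]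
      exact hx (b * a') (mul_mem hb ha') (key a' ha' ha'f b hb hbg)
    · -- product
      intro e he
      obtain ⟨⟨a, ha, haf⟩, hkf⟩ := hf e he
      obtain ⟨⟨b0, hb0, hb0g⟩, _⟩ := hg (a * (e * f)) haf
      have key : ∀ (a : F), a ∈ E → a * (e * f) ∈ E →
          ∀ (b : F), b ∈ E → b * (a * (e * f) * g) ∈ E →
          b * a * (e * (f * g)) ∈ E := by
        intro a ha haf b hb hbg
        have h1 : b * a * (e * (f * g)) = b * (a * (e * f) * g) := by
          simp only [mul_assoc]
        rw [h1]
        exact hbg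
      refine ⟨⟨b0 * a, mul_mem hb0 ha, key a ha haf b0 hb0 hb0g⟩, ?_⟩
      intro x hx
      refine hkf x ?_
      intro a' ha' ha'f
      obtain ⟨_, hk2⟩ := hg (a' * (e * f)) ha'f
      refine hk2 (φ ⟨a', ha'⟩ x) ?_
      intro b hb hbg
      rw [← hmulφ a' b ha' hb (mul_mem hb ha')]
      exact hx (b * a') (mul_mem hb ha') (key a' ha' ha'f b hb hbg)
  · -- closed under scalar multiplication
    intro c f hf e he
    obtain ⟨⟨a, ha, haf⟩, hk⟩ := hf e he
    have key : ∀ (a : F), a ∈ E → a * (e * f) ∈ E → a * (e * (c • f)) ∈ E := by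
      intro a ha haf
      have h1 : a * (e * (c • f)) = c • (a * (e * f)) := by
        rw [mul_smul_comm, mul_smul_comm]
      rw [h1]
      exact SMulMemClass.smul_mem c haf
    refine ⟨⟨a, ha, key a ha haf⟩, ?_⟩
    intro x hx
    refine hk x ?_
    intro a' ha' ha'f
    exact hx a' ha' (key a' ha' ha'f)
  · -- every element of F' is anchored
    intro f hf
    obtain ⟨e0, he0⟩ := hnd.1
    obtain ⟨⟨a0, ha0, ha0f⟩, _⟩ := hf e0 he0
    refine ⟨⟨a0 * e0, mul_mem ha0 he0, by rw [mul_assoc]; exact ha0f⟩, ?_⟩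
    intro x hx
    refine hnd.2 x ?_
    intro e he
    obtain ⟨_, hk⟩ := hf e he
    refine hk (φ ⟨e, he⟩ x) ?_
    intro a ha haf
    rw [← hmulφ e a he ha (mul_mem ha he)]
    exact hx (a * e) (mul_mem ha he) (by rw [mul_assoc]; exact haf)
  · -- maximality
    intro G hEG hGanch f hfG e he
    exact hGanch (e * f) (G.mul_mem (hEG he) hfG)
end

section
/- If F is a unital algebra, E ⊆ F a subalgebra, and Φ : E → L(X) an algebra representation, then the following are equivalent: (i) E is an anchor set; (ii) the unit 𝟏 of F is anchored in E; (iii) E ≠ ∅ and the set { f ∈ F : ∀ e ∈ E, [ef]_E is an anchor set } is nonempty. -/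
open Filter Topology

variable {F : Type*} [Ring F] [Algebra ℂ F]
variable {X : Type*} [NormedAddCommGroup X] [NormedSpace ℂ X]

/-- Equivalence of: (i) `E` is an anchor set; (ii) `𝟏` is anchored
in `E`; (iii) `E ≠ ∅` and the maximal anchored set is nonempty. -/
theorem stmt12 (E : NonUnitalSubalgebra ℂ F) (φ : E →ₙₐ[ℂ] (X →L[ℂ] X)) :
    List.TFAE [
      ((E : Set F).Nonempty ∧
        ∀ x : X, (∀ (e : F) (he : e ∈ E), φ ⟨e, he⟩ x = 0) → x = 0),
      AnchoredIn E φ (1 : F),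
      ((E : Set F).Nonempty ∧
        {f : F | ∀ e : F, e ∈ E → AnchoredIn E φ (e * f)}.Nonempty)] := by
  tfae_have 1 → 2
  · rintro ⟨⟨e, he⟩, hker⟩
    refine ⟨⟨e, he, by simpa using he⟩, fun x hx => hker x fun e' he' => ?_⟩
    exact hx e' he' (by simpa using he')
  tfae_have 2 → 3
  · rintro ⟨⟨e, he, -⟩, hker⟩
    refine ⟨⟨e, he⟩, 1, fun e' he' => ⟨⟨e, he, ?_⟩, fun x hx => ?_⟩⟩
    · simpa using mul_mem he he'
    · refine hker x fun a ha ha1 => hx a ha (by simpa using mul_mem ha he')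
  tfae_have 3 → 1
  · rintro ⟨⟨e, he⟩, f, hf⟩
    exact ⟨⟨e, he⟩, fun x hx => (hf e he).2 x fun e' he' _ => hx e' he'⟩
  tfae_finish
end

section
/- Let (e_n) be a weak approximate identity for f ∈ F with respect to a proto-calculus Φ (so Φ(e_n) → I weakly and Φ(e_n)Φ(f) ⊆ Φ(f)Φ(e_n) = Φ(f e_n) ∈ L(X) for all n). Then the span D of ⋃_n ran(Φ(e_n)) is dense in X, D ⊆ dom(Φ(f)), and dom(Φ(f)) ∩ D is a core for the closed operator Φ(f). -/
open Filter Topology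

variable {F : Type*} [Ring F] [Algebra ℂ F]
variable {X : Type*} [NormedAddCommGroup X] [NormedSpace ℂ X]

/-- `(e_n)` together with the bounded operators `T n = Φ(e_n)` is an approximate
identity *for* `f`: `Φ(e_n)Φ(f) ⊆ Φ(f)Φ(e_n) = Φ(f e_n) ∈ L(X)` for all `n`. -/
def IsAIFor {F : Type*} [CommRing F] [Algebra ℂ F] (Φ : ProtoCalculus F X)
    (e : ℕ → F) (T : ℕ → X →L[ℂ] X) (f : F) : Prop :=
  (∀ n, IsBddOp (Φ.toFun (e n)) (T n)) ∧
  (∀ n, Bdd (Φ.toFun (f * e n))) ∧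
  (∀ (n : ℕ) (x y : X), (x, y) ∈ (Φ.toFun f).graph →
    (T n x, T n y) ∈ (Φ.toFun f).graph) ∧
  (∀ (n : ℕ) (x z : X),
    (x, z) ∈ (Φ.toFun (f * e n)).graph ↔ (T n x, z) ∈ (Φ.toFun f).graph)

section Aux
variable {X : Type*} [NormedAddCommGroup X] [NormedSpace ℂ X]

/-- re of complex extension -/
lemma re_ext (g : X →L[ℝ] ℝ) (x : X) : ((g.extendTo𝕜' x : ℂ)).re = g x := by
  erw [ContinuousLinearMap.extendTo𝕜'_apply]
  simp

/-- A point that is a weak sequential limit of elements of a complex submodule lies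
in its closure. -/
lemma mem_closure_of_weak (S : Submodule ℂ X) (x : X) (s : ℕ → X)
    (hs : ∀ n, s n ∈ S)
    (h : ∀ g : X →L[ℝ] ℝ, Tendsto (fun n => g (s n)) atTop (𝓝 (g x))) :
    x ∈ closure (S : Set X) := by
  by_contra hx
  have hconv : Convex ℝ (closure (S : Set X)) := by
    have : Convex ℝ (S : Set X) := by
      intro a ha b hb t u ht hu htu
      exact S.add_mem (S.smul_mem (t : ℂ) ha) (S.smul_mem (u : ℂ) hb)
    exact this.closure
  obtain ⟨g, u, hgS, hux⟩ := geometric_hahn_banach_closed_point hconv isClosed_closure hx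
  have hg0 : ∀ a ∈ S, g a = 0 := by
    intro a ha
    by_contra hga
    have : ∀ t : ℝ, t * g a < u := by
      intro t
      have : g (t • a) < u := hgS _ (subset_closure (S.smul_mem (t : ℂ) ha))
      simpa [map_smul] using this
    have := this ((u + 1) / g a)
    rw [div_mul_cancel₀ _ hga] at this; linarith
  have h0 : (0 : ℝ) < u := by
    have := hgS 0 (subset_closure S.zero_mem)
    simpa using this
  have : Tendsto (fun n => g (s n)) atTop (𝓝 (g x)) := h g
  have hzero : (fun n => g (s n)) = fun _ => (0 : ℝ) := funext fun n => hg0 _ (hs n)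
  rw [hzero] at this
  have : g x = 0 := (tendsto_nhds_unique tendsto_const_nhds this).symm
  linarith

end Aux

/-- For a weak approximate identity `(e_n)` for `f`, the span `D` of
the ranges of the `Φ(e_n)` is dense in `X`, contained in `dom Φ(f)`, and
`dom Φ(f) ∩ D` is a core for `Φ(f)`. -/
theorem stmt13 {F : Type*} [CommRing F] [Algebra ℂ F] (Φ : ProtoCalculus F X)
    (f : F) (e : ℕ → F) (T : ℕ → X →L[ℂ] X)
    (hAI : IsAIFor Φ e T f)
    (hweak : ∀ (x : X) (l : X →L[ℂ] ℂ),
      Tendsto (fun n => l (T n x)) atTop (𝓝 (l x))) :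
    Dense ((Submodule.span ℂ (⋃ n, Set.range (T n)) : Submodule ℂ X) : Set X) ∧
    ((Submodule.span ℂ (⋃ n, Set.range (T n)) : Submodule ℂ X) : Set X) ⊆
      ((Φ.toFun f).domain : Set X) ∧
    closure (((Φ.toFun f).graph : Set (X × X)) ∩
        {p : X × X | p.1 ∈ Submodule.span ℂ (⋃ n, Set.range (T n))}) =
      ((Φ.toFun f).graph : Set (X × X)) := by
  obtain ⟨hbdd, hfe, hcomm, hmul⟩ := hAI
  set D : Submodule ℂ X := Submodule.span ℂ (⋃ n, Set.range (T n)) with hD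
  have hmemD : ∀ (n : ℕ) (x : X), T n x ∈ D := fun n x =>
    Submodule.subset_span (Set.mem_iUnion.2 ⟨n, ⟨x, rfl⟩⟩)
  have hreal : ∀ (g : X →L[ℝ] ℝ) (x : X),
      Tendsto (fun n => g (T n x)) atTop (𝓝 (g x)) := by
    intro g x
    have h1 := hweak x g.extendTo𝕜'
    have h2 := (Complex.continuous_re.tendsto _).comp h1
    simpa [Function.comp_def, re_ext] using h2
  refine ⟨?_, ?_, ?_⟩
  · exact fun x => mem_closure_of_weak D x (fun n => T n x)
      (fun n => hmemD n x) (fun g => hreal g x)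
  · rw [SetLike.coe_subset_coe, hD, Submodule.span_le]
    rintro v hv
    obtain ⟨_, ⟨n, rfl⟩, x, rfl⟩ := hv
    obtain ⟨S, hS⟩ := hfe n
    have h1 : (x, S x) ∈ (Φ.toFun (f * e n)).graph := (hS x (S x)).mpr rfl
    have h2 := (hmul n x (S x)).mp h1
    exact LinearPMap.mem_domain_of_mem_graph h2
  · set G : Submodule ℂ (X × X) :=
      (Φ.toFun f).graph ⊓ Submodule.comap (LinearMap.fst ℂ X X) D with hG
    have hset : ((Φ.toFun f).graph : Set (X × X)) ∩ {p : X × X | p.1 ∈ D}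
        = (G : Set (X × X)) := rfl
    rw [hset]
    apply subset_antisymm
    · calc closure (G : Set (X × X)) ⊆ closure ((Φ.toFun f).graph : Set (X × X)) := by
            apply closure_mono
            rw [hG, Submodule.coe_inf]
            exact Set.inter_subset_left
        _ = ((Φ.toFun f).graph : Set (X × X)) := (Φ.closed f).closure_eq
    · rintro ⟨x, y⟩ hp
      apply mem_closure_of_weak G (x, y) (fun n => (T n x, T n y))
      · intro n
        exact Submodule.mem_inf.mpr ⟨hcomm n x y hp, Submodule.mem_comap.mpr (hmemD n x)⟩
      · intro g
        set g1 : X →L[ℝ] ℝ := g.comp (ContinuousLinearMap.inl ℝ X X) with hg1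
        set g2 : X →L[ℝ] ℝ := g.comp (ContinuousLinearMap.inr ℝ X X) with hg2
        have hsplit : ∀ p : X × X, g p = g1 p.1 + g2 p.2 := by
          intro p
          rw [hg1, hg2]
          simp only [ContinuousLinearMap.comp_apply, ContinuousLinearMap.inl_apply,
            ContinuousLinearMap.inr_apply]
          rw [← map_add]
          simp
        simp only [hsplit]
        exact (hreal g1 x).add (hreal g2 y)
end

section
/- Let Φ : F → C(X) be a proto-calculus over a commutative unital algebra and (e_n) a weak approximate identity for both f and g. Then (e_n) is a weak approximate identity for f+g, and the closure of Φ(f) + Φ(g) equals Φ(f+g). -/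
open Filter Topology

variable {F : Type*} [Ring F] [Algebra ℂ F]
variable {X : Type*} [NormedAddCommGroup X] [NormedSpace ℂ X]

/-- Separation of a point from a closed subspace by a continuous functional. -/
theorem exists_functional_stmt15 {E : Type*} [NormedAddCommGroup E] [NormedSpace ℂ E]
    (p : Submodule ℂ E) (hp : IsClosed (p : Set E)) {x : E} (hx : x ∉ p) :
    ∃ l : E →L[ℂ] ℂ, (∀ y ∈ p, l y = 0) ∧ l x ≠ 0 := by
  haveI := hp
  let Q : E →L[ℂ] E ⧸ p :=
    LinearMap.mkContinuous p.mkQ 1 (fun m => by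
      simpa using Submodule.Quotient.norm_mk_le p m)
  have hQx : p.mkQ x ≠ 0 := by
    simpa [Submodule.Quotient.mk_eq_zero] using hx
  obtain ⟨g, -, hg⟩ := exists_dual_vector ℂ (p.mkQ x) (norm_ne_zero_iff.mpr hQx)
  refine ⟨g.comp Q, ?_, ?_⟩
  · intro y hy
    have h0 : Q y = 0 := by
      show p.mkQ y = 0
      simpa [Submodule.Quotient.mk_eq_zero] using hy
    simp [ContinuousLinearMap.comp_apply, h0]
  · have hne : (‖p.mkQ x‖ : ℂ) ≠ 0 := by
      exact_mod_cast norm_ne_zero_iff.mpr hQx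
    show g (Q x) ≠ 0
    have hQ : Q x = p.mkQ x := rfl
    rw [hQ, hg]
    exact hne

/-- If `(e_n)` is a weak approximate identity for `f` and `g`, then
it is one for `f + g`, and the closure of `Φ(f) + Φ(g)` equals `Φ(f+g)`. -/
theorem stmt15 {F : Type*} [CommRing F] [Algebra ℂ F] (Φ : ProtoCalculus F X)
    (f g : F) (e : ℕ → F) (T : ℕ → X →L[ℂ] X)
    (hf : IsAIFor Φ e T f) (hg : IsAIFor Φ e T g)
    (hweak : ∀ (x : X) (l : X →L[ℂ] ℂ),
      Tendsto (fun n => l (T n x)) atTop (𝓝 (l x))) :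
    IsAIFor Φ e T (f + g) ∧
    closure {p : X × X | ∃ y z : X,
        (p.1, y) ∈ (Φ.toFun f).graph ∧ (p.1, z) ∈ (Φ.toFun g).graph ∧
          p.2 = y + z} =
      ((Φ.toFun (f + g)).graph : Set (X × X)):= by
  obtain ⟨hfT, hfB, hf3, hf4⟩ := hf
  obtain ⟨hgT, hgB, hg3, hg4⟩ := hg
  choose Sf hSf using hfB
  choose Sg hSg using hgB
  -- Key: Φ((f+g)e_n) is the bounded operator Sf n + Sg n
  have keyA : ∀ (n : ℕ) (x z : X),
      (x, z) ∈ (Φ.toFun ((f + g) * e n)).graph ↔ z = Sf n x + Sg n x := by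
    intro n x z
    have hmem : (x, Sf n x + Sg n x) ∈ (Φ.toFun ((f + g) * e n)).graph := by
      have h1 : (x, Sf n x) ∈ (Φ.toFun (f * e n)).graph := (hSf n x (Sf n x)).mpr rfl
      have h2 : (x, Sg n x) ∈ (Φ.toFun (g * e n)).graph := (hSg n x (Sg n x)).mpr rfl
      have := Φ.fc2_add (f * e n) (g * e n) x (Sf n x) (Sg n x) h1 h2
      rwa [← add_mul] at this
    constructor
    · intro hz
      exact (Φ.toFun ((f + g) * e n)).mem_graph_snd_inj hz hmem rfl
    · rintro rfl; exact hmem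
  -- condition (4) for f + g
  have keyB : ∀ (n : ℕ) (x z : X),
      (x, z) ∈ (Φ.toFun ((f + g) * e n)).graph ↔ (T n x, z) ∈ (Φ.toFun (f + g)).graph := by
    intro n x z
    constructor
    · intro h
      rw [keyA n x z] at h
      subst h
      have h1 : (T n x, Sf n x) ∈ (Φ.toFun f).graph :=
        (hf4 n x (Sf n x)).mp ((hSf n x (Sf n x)).mpr rfl)
      have h2 : (T n x, Sg n x) ∈ (Φ.toFun g).graph :=
        (hg4 n x (Sg n x)).mp ((hSg n x (Sg n x)).mpr rfl)
      exact Φ.fc2_add f g (T n x) (Sf n x) (Sg n x) h1 h2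
    · intro h
      have hen : (x, T n x) ∈ (Φ.toFun (e n)).graph := (hfT n x (T n x)).mpr rfl
      exact Φ.fc3_comp (f + g) (e n) x (T n x) z hen h
  have keyC : ∀ (n : ℕ) (x y : X), (x, y) ∈ (Φ.toFun (f + g)).graph →
      (x, T n y) ∈ (Φ.toFun ((f + g) * e n)).graph := by
    intro n x y hxy
    have hen : (y, T n y) ∈ (Φ.toFun (e n)).graph := (hfT n y (T n y)).mpr rfl
    have := Φ.fc3_comp (e n) (f + g) x y (T n y) hxy hen
    rwa [mul_comm] at this
  have hAI : IsAIFor Φ e T (f + g) := by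
    refine ⟨hfT, ?_, ?_, keyB⟩
    · intro n
      refine ⟨Sf n + Sg n, fun x z => ?_⟩
      rw [keyA n x z, ContinuousLinearMap.add_apply]
      exact ⟨fun h => h.symm, fun h => h.symm⟩
    · intro n x y hxy
      exact (keyB n x (T n y)).mp (keyC n x y hxy)
  refine ⟨hAI, ?_⟩
  set S : Set (X × X) := {p : X × X | ∃ y z : X,
      (p.1, y) ∈ (Φ.toFun f).graph ∧ (p.1, z) ∈ (Φ.toFun g).graph ∧ p.2 = y + z} with hS
  have hSsub : S ⊆ ((Φ.toFun (f + g)).graph : Set (X × X)) := by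
    rintro ⟨x, w⟩ ⟨y, z, hy, hz, rfl⟩
    exact Φ.fc2_add f g x y z hy hz
  -- S is a submodule
  let p : Submodule ℂ (X × X) :=
    { carrier := S
      add_mem' := by
        rintro ⟨x1, w1⟩ ⟨x2, w2⟩ ⟨y1, z1, hy1, hz1, rfl⟩ ⟨y2, z2, hy2, hz2, rfl⟩
        refine ⟨y1 + y2, z1 + z2, ?_, ?_, ?_⟩
        · exact (Φ.toFun f).graph.add_mem hy1 hy2
        · exact (Φ.toFun g).graph.add_mem hz1 hz2
        · show (y1 + z1) + (y2 + z2) = (y1 + y2) + (z1 + z2)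
          abel
      zero_mem' := ⟨0, 0, (Φ.toFun f).graph.zero_mem, (Φ.toFun g).graph.zero_mem,
        (add_zero (0 : X)).symm⟩
      smul_mem' := by
        rintro c ⟨x, w⟩ ⟨y, z, hy, hz, rfl⟩
        refine ⟨c • y, c • z, ?_, ?_, ?_⟩
        · exact (Φ.toFun f).graph.smul_mem c hy
        · exact (Φ.toFun g).graph.smul_mem c hz
        · show c • (y + z) = c • y + c • z
          rw [smul_add] }
  apply Set.eq_of_subset_of_subset
  · exact closure_minimal hSsub (Φ.closed (f + g))
  · rintro ⟨x, w⟩ hxw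
    by_contra hnot
    have hclosed : IsClosed ((p.topologicalClosure : Submodule ℂ (X × X)) : Set (X × X)) :=
      p.isClosed_topologicalClosure
    have hcoe : ((p.topologicalClosure : Submodule ℂ (X × X)) : Set (X × X)) = closure S :=
      rfl
    have hmem : (x, w) ∉ p.topologicalClosure := by
      intro h
      exact hnot (by rw [← hcoe]; exact h)
    obtain ⟨l, hl0, hlx⟩ := exists_functional_stmt15 p.topologicalClosure hclosed hmem
    have hSn : ∀ n : ℕ, ((T n x, T n w) : X × X) ∈ p.topologicalClosure := by
      intro n
      apply Submodule.le_topologicalClosure p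
      have h1 : (x, T n w) ∈ (Φ.toFun ((f + g) * e n)).graph := keyC n x w hxw
      have h2 : T n w = Sf n x + Sg n x := (keyA n x (T n w)).mp h1
      refine ⟨Sf n x, Sg n x, ?_, ?_, h2⟩
      · exact (hf4 n x (Sf n x)).mp ((hSf n x (Sf n x)).mpr rfl)
      · exact (hg4 n x (Sg n x)).mp ((hSg n x (Sg n x)).mpr rfl)
    let l1 : X →L[ℂ] ℂ := l.comp (ContinuousLinearMap.inl ℂ X X)
    let l2 : X →L[ℂ] ℂ := l.comp (ContinuousLinearMap.inr ℂ X X)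
    have hdecomp : ∀ a b : X, l (a, b) = l1 a + l2 b := by
      intro a b
      have : ((a, b) : X × X) = (a, 0) + (0, b) := by simp
      rw [this, map_add]
      rfl
    have hzero : ∀ n : ℕ, l1 (T n x) + l2 (T n w) = 0 := by
      intro n
      rw [← hdecomp]
      exact hl0 _ (hSn n)
    have htend : Tendsto (fun n => l1 (T n x) + l2 (T n w)) atTop (𝓝 (l1 x + l2 w)) :=
      (hweak x l1).add (hweak w l2)
    have htend0 : Tendsto (fun n => l1 (T n x) + l2 (T n w)) atTop (𝓝 (0 : ℂ)) := by
      simp only [hzero]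
      exact tendsto_const_nhds
    have : l1 x + l2 w = 0 := tendsto_nhds_unique htend htend0
    rw [← hdecomp] at this
    exact hlx this
end

section
/- Closed graph theorem for the weak* topology: Let X, Y be Banach spaces and T : X' → Y' a bounded linear operator whose graph is closed with respect to the weak* topologies on X' and Y'. Then T is weak*-to-weak* continuous, and hence T = S' (the adjoint) for some bounded operator S ∈ L(Y, X). -/
set_option maxHeartbeats 1000000

open NormedSpace

/-- A map with closed graph taking values in a compact set is continuous. -/
theorem stmt16_aux_cont_of_graph {α β : Type*} [TopologicalSpace α] [TopologicalSpace β]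
    {f : α → β} {K : Set β} (hK : IsCompact K) (hfK : ∀ a, f a ∈ K)
    (hg : IsClosed {p : α × β | f p.1 = p.2}) : Continuous f := by
  rw [continuous_iff_continuousAt]
  intro a
  rw [ContinuousAt, Filter.tendsto_iff_ultrafilter]
  intro U hU
  have hKU : ↑(Ultrafilter.map f U) ≤ Filter.principal K :=
    Filter.le_principal_iff.2 (Filter.mem_map.2 (Filter.univ_mem' hfK))
  obtain ⟨b, hbK, hb⟩ := hK.ultrafilter_le_nhds (U.map f) hKU
  have h2 : Filter.Tendsto (fun x => (x, f x)) U (nhds (a, b)) := by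
    rw [nhds_prod_eq]; exact Filter.Tendsto.prodMk hU hb
  have h3 : (a, b) ∈ {p : α × β | f p.1 = p.2} :=
    hg.mem_of_tendsto h2 (Filter.Eventually.of_forall fun x => rfl)
  exact h3 ▸ hb

/-- Krein-Smulian-type result: a functional on the dual which is weak*-continuous
(at `0`) on the closed unit ball is an evaluation at a point of `X`. -/
theorem stmt16_aux_mem_range {X : Type*} [NormedAddCommGroup X] [NormedSpace ℂ X]
    [CompleteSpace X] (φ : StrongDual ℂ (StrongDual ℂ X))
    (hφ : ContinuousWithinAt (fun x' : WeakDual ℂ X => φ (WeakDual.toStrongDual x'))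
      (WeakDual.toStrongDual ⁻¹' Metric.closedBall 0 1) 0) :
    ∃ x : X, inclusionInDoubleDual ℂ X x = φ := by
  have hclosedrange : IsClosed (Set.range (inclusionInDoubleDual ℂ X)) := by
    have h1 : Isometry (inclusionInDoubleDual ℂ X : X → StrongDual ℂ (StrongDual ℂ X)) :=
      (inclusionInDoubleDualLi ℂ (E := X)).isometry
    exact h1.isClosedEmbedding.isClosed_range
  suffices h : φ ∈ closure (Set.range (inclusionInDoubleDual ℂ X)) by
    exact hclosedrange.closure_subset h
  refine (Metric.mem_closure_iff (α := StrongDual ℂ (StrongDual ℂ X))).2 ?_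
  intro ε hε
  have hε2 : 0 < ε / 2 := by linarith
  -- extract a neighborhood from continuity at 0
  have h00 : (fun x' : WeakDual ℂ X => φ (WeakDual.toStrongDual x')) 0 = 0 := by
    simp
  have hmem : {x' : WeakDual ℂ X | ‖φ (WeakDual.toStrongDual x')‖ < ε / 2} ∈
      nhdsWithin (0 : WeakDual ℂ X) (WeakDual.toStrongDual ⁻¹' Metric.closedBall 0 1) := by
    have h1 := hφ.tendsto
    rw [show φ (WeakDual.toStrongDual (0 : WeakDual ℂ X)) = 0 by simp] at h1
    have h2 := h1 (Metric.ball_mem_nhds (0 : ℂ) hε2)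
    refine Filter.mem_of_superset h2 ?_
    intro x' hx'
    simpa [Metric.mem_ball, dist_eq_norm] using hx'
  obtain ⟨U, hUopen, hU0, hUsub⟩ := mem_nhdsWithin.1 hmem
  have hU : U ∈ nhds (0 : WeakDual ℂ X) := hUopen.mem_nhds hU0
  obtain ⟨⟨s, r⟩, hr, hball⟩ :=
    ((LinearMap.weakBilin_withSeminorms (topDualPairing ℂ X)).hasBasis_zero_ball.mem_iff).1 hU
  -- the key quantitative claim
  have hclaim : ∀ x' : StrongDual ℂ X, (∀ x ∈ s, x' x = 0) → ‖φ x'‖ ≤ ε / 2 * ‖x'‖ := by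
    have hsmall : ∀ x' : StrongDual ℂ X, (∀ x ∈ s, x' x = 0) → ‖x'‖ ≤ 1 → ‖φ x'‖ ≤ ε / 2 := by
      intro x' hker hnorm
      have hmemU : (StrongDual.toWeakDual x' : WeakDual ℂ X) ∈ U := by
        apply hball
        refine (Seminorm.mem_ball_zero _).2 ?_
        refine Seminorm.finset_sup_apply_lt hr ?_
        intro i hi
        simp only [LinearMap.toSeminormFamily_apply, topDualPairing_apply]
        show ‖x' i‖ < r
        rw [hker i hi, norm_zero]
        exact hr
      have hmemB : (StrongDual.toWeakDual x' : WeakDual ℂ X) ∈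
          (WeakDual.toStrongDual ⁻¹' Metric.closedBall 0 1 : Set (WeakDual ℂ X)) := by
        simpa [Metric.mem_closedBall, dist_eq_norm] using hnorm
      have := hUsub ⟨hmemU, hmemB⟩
      exact le_of_lt this
    intro x' hker
    rcases eq_or_ne x' 0 with rfl | hne
    · simp
    · have hpos : 0 < ‖x'‖ := norm_pos_iff.2 hne
      set c : ℂ := (‖x'‖ : ℂ)⁻¹ with hc
      have hcnorm : ‖c‖ = ‖x'‖⁻¹ := by
        rw [hc, norm_inv, Complex.norm_real, Real.norm_eq_abs, abs_of_pos hpos]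
      have hunorm : ‖c • x'‖ = 1 := by
        rw [norm_smul, hcnorm, inv_mul_cancel₀ hpos.ne']
      have huker : ∀ x ∈ s, (c • x') x = 0 := by
        intro x hx
        simp [ContinuousLinearMap.smul_apply, hker x hx]
      have h1 := hsmall (c • x') huker hunorm.le
      rw [map_smul, norm_smul, hcnorm] at h1
      have h2 : ‖x'‖⁻¹ * ‖φ x'‖ ≤ ε / 2 := h1
      calc ‖φ x'‖ = ‖x'‖ * (‖x'‖⁻¹ * ‖φ x'‖) := by
            field_simp
        _ ≤ ‖x'‖ * (ε / 2) := by
            exact mul_le_mul_of_nonneg_left h2 hpos.le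
        _ = ε / 2 * ‖x'‖ := by ring
  -- the finite family of functionals
  set L : {x // x ∈ s} → (StrongDual ℂ X →ₗ[ℂ] ℂ) :=
    fun i => (inclusionInDoubleDual ℂ X (i : X) : StrongDual ℂ X →ₗ[ℂ] ℂ) with hL
  set Ksub : @Submodule ℂ (StrongDual ℂ X) _ SeminormedAddCommGroup.toAddCommGroup.toAddCommMonoid
      NormedSpace.toModule := ⨅ i, LinearMap.ker (L i) with hKsub
  have hKmem : ∀ x' : StrongDual ℂ X, x' ∈ Ksub ↔ ∀ x ∈ s, x' x = 0 := by
    intro x'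
    simp only [hKsub, Submodule.mem_iInf, LinearMap.mem_ker]
    constructor
    · intro h x hx; exact h ⟨x, hx⟩
    · intro h i; exact h i i.2
  -- restriction to Ksub and Hahn-Banach
  set ψ : Ksub →L[ℂ] ℂ := φ.comp Ksub.subtypeL with hψ
  have hψnorm : ‖ψ‖ ≤ ε / 2 := by
    refine ContinuousLinearMap.opNorm_le_bound _ hε2.le ?_
    intro x'
    exact hclaim x' ((hKmem x').1 x'.2)
  obtain ⟨g, hgext, hgnorm⟩ := exists_extension_norm_eq Ksub ψ
  have hkerle : (⨅ i, LinearMap.ker (L i)) ≤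
      LinearMap.ker ((φ - g : StrongDual ℂ X →L[ℂ] ℂ) : StrongDual ℂ X →ₗ[ℂ] ℂ) := by
    intro x' hx'
    have hx'K : x' ∈ Ksub := hx'
    have := hgext ⟨x', hx'K⟩
    simp only [LinearMap.mem_ker, ContinuousLinearMap.coe_coe,
      ContinuousLinearMap.sub_apply]
    rw [this]
    simp [hψ]
  have hspan := mem_span_of_iInf_ker_le_ker hkerle
  obtain ⟨c, hc⟩ := (Submodule.mem_span_range_iff_exists_fun ℂ).1 hspan
  set x₀ : X := ∑ i, c i • (i : X) with hx₀
  have hJx₀ : inclusionInDoubleDual ℂ X x₀ = φ - g := by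
    apply ContinuousLinearMap.coe_injective
    rw [← hc]
    refine LinearMap.ext fun x' => ?_
    simp only [hx₀, ContinuousLinearMap.coe_coe, dual_def, map_sum, map_smul,
      LinearMap.sum_apply, LinearMap.smul_apply, hL, smul_eq_mul,
      ContinuousLinearMap.coe_sum', Finset.sum_apply, ContinuousLinearMap.coe_smul',
      Pi.smul_apply]
  refine ⟨inclusionInDoubleDual ℂ X x₀, Set.mem_range_self _, ?_⟩
  rw [@dist_eq_norm _ ContinuousLinearMap.toSeminormedAddCommGroup, hJx₀]
  have : φ - (φ - g) = g := by abel
  rw [this, hgnorm]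
  exact lt_of_le_of_lt hψnorm (by linarith)

/-- **Closed graph theorem for the weak* topology.** If a bounded
linear operator `T : X' → Y'` between duals of Banach spaces has a graph which is
closed for the weak* topologies, then `T` is weak*-to-weak* continuous and is the
adjoint of a bounded operator `S : Y → X`. -/
theorem stmt16 {X Y : Type*}
    [NormedAddCommGroup X] [NormedSpace ℂ X] [CompleteSpace X]
    [NormedAddCommGroup Y] [NormedSpace ℂ Y] [CompleteSpace Y]
    (T : StrongDual ℂ X →L[ℂ] StrongDual ℂ Y)
    (hclosed : IsClosed {p : WeakDual ℂ X × WeakDual ℂ Y |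
      StrongDual.toWeakDual (T (WeakDual.toStrongDual p.1)) = p.2}) :
    Continuous (fun x' : WeakDual ℂ X =>
      StrongDual.toWeakDual (T (WeakDual.toStrongDual x'))) ∧
    ∃ S : Y →L[ℂ] X, ∀ (x' : StrongDual ℂ X) (y : Y), T x' y = x' (S y) := by
  classical
  have key : ∀ y : Y, ∃ x : X, ∀ x' : StrongDual ℂ X, x' x = T x' y := by
    intro y
    set B : Set (WeakDual ℂ X) := WeakDual.toStrongDual ⁻¹' Metric.closedBall 0 1 with hB
    have hBcomp : IsCompact B := WeakDual.isCompact_closedBall (𝕜 := ℂ) (E := X) 0 1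
    set K : Set (WeakDual ℂ Y) := WeakDual.toStrongDual ⁻¹' Metric.closedBall 0 ‖T‖ with hK
    have hKcomp : IsCompact K := WeakDual.isCompact_closedBall (𝕜 := ℂ) (E := Y) 0 ‖T‖
    set f : WeakDual ℂ X → WeakDual ℂ Y :=
      fun x' => StrongDual.toWeakDual (T (WeakDual.toStrongDual x')) with hf
    have hfK : ∀ a : B, f (a : WeakDual ℂ X) ∈ K := by
      intro a
      have ha : ‖WeakDual.toStrongDual (a : WeakDual ℂ X)‖ ≤ 1 :=
        mem_closedBall_zero_iff.1 a.2
      have h2 : ‖T (WeakDual.toStrongDual (a : WeakDual ℂ X))‖ ≤ ‖T‖ := by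
        calc ‖T (WeakDual.toStrongDual (a : WeakDual ℂ X))‖
            ≤ ‖T‖ * ‖WeakDual.toStrongDual (a : WeakDual ℂ X)‖ := T.le_opNorm _
          _ ≤ ‖T‖ * 1 := by
              exact mul_le_mul_of_nonneg_left ha (norm_nonneg T)
          _ = ‖T‖ := mul_one _
      exact Set.mem_preimage.2 (mem_closedBall_zero_iff.2 h2)
    have hgraph : IsClosed {p : B × WeakDual ℂ Y | f (p.1 : WeakDual ℂ X) = p.2} := by
      have hc : Continuous fun p : B × WeakDual ℂ Y => ((p.1 : WeakDual ℂ X), p.2) :=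
        (continuous_subtype_val.comp continuous_fst).prodMk continuous_snd
      exact hclosed.preimage hc
    have hcont : Continuous fun a : B => f (a : WeakDual ℂ X) :=
      stmt16_aux_cont_of_graph hKcomp hfK hgraph
    have hContOn : ContinuousOn f B := continuousOn_iff_continuous_restrict.2 hcont
    set φ : StrongDual ℂ (StrongDual ℂ X) := (inclusionInDoubleDual ℂ Y y).comp T with hφdef
    have hφc : ContinuousWithinAt (fun x' : WeakDual ℂ X => φ (WeakDual.toStrongDual x')) B 0 := by
      have h1 : ContinuousOn (fun x' : WeakDual ℂ X => (f x') y) B :=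
        (WeakDual.eval_continuous y).comp_continuousOn hContOn
      have h0 : (0 : WeakDual ℂ X) ∈ B := by
        simp [hB, Metric.mem_closedBall]
      exact h1.continuousWithinAt h0
    obtain ⟨x, hx⟩ := stmt16_aux_mem_range φ hφc
    exact ⟨x, fun x' => by simpa [hφdef] using DFunLike.congr_fun hx x'⟩
  choose Sf hSf using key
  have hSadd : ∀ y₁ y₂, Sf (y₁ + y₂) = Sf y₁ + Sf y₂ := by
    intro y₁ y₂
    refine (eq_iff_forall_dual_eq ℂ).2 fun g => ?_
    simp only [hSf, map_add]
  have hSsmul : ∀ (c : ℂ) (y : Y), Sf (c • y) = c • Sf y := by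
    intro c y
    refine (eq_iff_forall_dual_eq ℂ).2 fun g => ?_
    simp only [hSf, map_smul]
  set Slin : Y →ₗ[ℂ] X :=
    { toFun := Sf, map_add' := hSadd, map_smul' := hSsmul } with hSlin
  have hbound : ∀ y, ‖Slin y‖ ≤ ‖T‖ * ‖y‖ := by
    intro y
    refine norm_le_dual_bound ℂ _ (by positivity) fun g => ?_
    rw [show g (Slin y) = T g y from hSf y g]
    calc ‖T g y‖ ≤ ‖T g‖ * ‖y‖ := (T g).le_opNorm y
      _ ≤ (‖T‖ * ‖g‖) * ‖y‖ :=
          mul_le_mul_of_nonneg_right (T.le_opNorm g) (norm_nonneg y)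
      _ = ‖T‖ * ‖y‖ * ‖g‖ := by ring
  set S : Y →L[ℂ] X := Slin.mkContinuous ‖T‖ hbound with hS
  constructor
  · apply WeakDual.continuous_of_continuous_eval
    intro y
    have heq : (fun x' : WeakDual ℂ X => StrongDual.toWeakDual (T (WeakDual.toStrongDual x')) y)
        = fun x' : WeakDual ℂ X => x' (Sf y) := by
      funext x'
      exact (hSf y (WeakDual.toStrongDual x')).symm
    show Continuous fun x' : WeakDual ℂ X => StrongDual.toWeakDual (T (WeakDual.toStrongDual x')) y
    rw [heq]
    exact WeakDual.eval_continuous _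
  · exact ⟨S, fun x' y => (hSf y x').symm⟩
end
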